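/- Let E, μ, M, k_x, k_y, k_z be real numbers with E_k = √(k_x² + k_y² + k_z² + M²), let Δ be a complex number, assume (E − μ)² ≠ E_k², and let k̸ = E γ⁰ − k_x γ¹ − k_y γ² − k_z γ³ with γ⁰, γ¹, γ², γ³ the 4 × 4 Dirac matrices in the Dirac representation. Then det( k̸ + μ γ⁰ − M·I₄ − |Δ|² · ((E − μ)² − E_k²)⁻¹ · (k̸ − μ γ⁰ − M·I₄) ) = ( (E² − (E_k + μ)² − |Δ|²)² (E² − (E_k − μ)² − |Δ|²)² ) / ( (E − E_k − μ)² (E + E_k − μ)² ). -/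

import Mathlib

open Matrix

noncomputable section

/-- `γ⁰ = diag(I₂, −I₂)` in the Dirac representation. -/
def gamma0 : Matrix (Fin 4) (Fin 4) ℂ :=
  !![1, 0, 0, 0; 0, 1, 0, 0; 0, 0, -1, 0; 0, 0, 0, -1]

/-- `γ¹ = [[0, σ₁], [−σ₁, 0]]` with `σ₁ = [[0,1],[1,0]]`. -/
def gamma1 : Matrix (Fin 4) (Fin 4) ℂ :=
  !![0, 0, 0, 1; 0, 0, 1, 0; 0, -1, 0, 0; -1, 0, 0, 0]

/-- `γ² = [[0, σ₂], [−σ₂, 0]]` with `σ₂ = [[0,−i],[i,0]]`. -/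
def gamma2 : Matrix (Fin 4) (Fin 4) ℂ :=
  !![0, 0, 0, -Complex.I; 0, 0, Complex.I, 0;
     0, Complex.I, 0, 0; -Complex.I, 0, 0, 0]

/-- `γ³ = [[0, σ₃], [−σ₃, 0]]` with `σ₃ = [[1,0],[0,−1]]`. -/
def gamma3 : Matrix (Fin 4) (Fin 4) ℂ :=
  !![0, 0, 1, 0; 0, 0, 0, -1; -1, 0, 0, 0; 0, 1, 0, 0]

set_option maxHeartbeats 1000000 in
lemma det_dirac (a b1 b2 b3 m : ℂ) :
    (a • gamma0 - b1 • gamma1 - b2 • gamma2 - b3 • gamma3 - m • (1 : Matrix (Fin 4) (Fin 4) ℂ)).det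
      = (a ^ 2 - b1 ^ 2 - b2 ^ 2 - b3 ^ 2 - m ^ 2) ^ 2 := by
  have hM : a • gamma0 - b1 • gamma1 - b2 • gamma2 - b3 • gamma3 - m • (1 : Matrix (Fin 4) (Fin 4) ℂ)
      = !![a - m, 0, -b3, -b1 + Complex.I * b2;
           0, a - m, -b1 - Complex.I * b2, b3;
           b3, b1 - Complex.I * b2, -a - m, 0;
           b1 + Complex.I * b2, -b3, 0, -a - m] := by
    unfold gamma0 gamma1 gamma2 gamma3
    ext i j
    fin_cases i <;> fin_cases j <;>
      simp [Matrix.one_apply] <;> ring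
  rw [hM]
  rw [Matrix.det_succ_row_zero]
  simp [Fin.sum_univ_succ, Matrix.det_succ_row_zero, Matrix.submatrix_apply, Fin.succAbove, Fin.castSucc, Fin.castAdd, Fin.castLE]
  ring_nf
  simp [Complex.I_sq]
  ring

/-- `k̸ = E γ⁰ − k_x γ¹ − k_y γ² − k_z γ³`. -/
def slashK (E kx ky kz : ℝ) : Matrix (Fin 4) (Fin 4) ℂ :=
  (E : ℂ) • gamma0 - (kx : ℂ) • gamma1 - (ky : ℂ) • gamma2 - (kz : ℂ) • gamma3

/-- The determinant of the gapped block
`k̸ + μγ⁰ − M·I₄ − |Δ|²((E−μ)² − E_k²)⁻¹ (k̸ − μγ⁰ − M·I₄)` equals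
`(E² − (E_k+μ)² − |Δ|²)² (E² − (E_k−μ)² − |Δ|²)² / ((E − E_k − μ)² (E + E_k − μ)²)`. -/
theorem det_gapped_block (E μ M kx ky kz Ek : ℝ) (Δ : ℂ)
    (hEk : Ek = Real.sqrt (kx ^ 2 + ky ^ 2 + kz ^ 2 + M ^ 2))
    (h : (E - μ) ^ 2 ≠ Ek ^ 2) :
    (slashK E kx ky kz + (μ : ℂ) • gamma0 - (M : ℂ) • 1 -
        (((Complex.normSq Δ : ℂ)) * ((((E - μ) ^ 2 - Ek ^ 2 : ℝ) : ℂ))⁻¹) •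
          (slashK E kx ky kz - (μ : ℂ) • gamma0 - (M : ℂ) • 1)).det =
      (((E : ℂ) ^ 2 - ((Ek : ℂ) + (μ : ℂ)) ^ 2 - (Complex.normSq Δ : ℂ)) ^ 2 *
          ((E : ℂ) ^ 2 - ((Ek : ℂ) - (μ : ℂ)) ^ 2 - (Complex.normSq Δ : ℂ)) ^ 2) /
        (((E : ℂ) - (Ek : ℂ) - (μ : ℂ)) ^ 2 * ((E : ℂ) + (Ek : ℂ) - (μ : ℂ)) ^ 2) := by

  set r : ℂ := ((Complex.normSq Δ : ℂ)) * ((((E - μ) ^ 2 - Ek ^ 2 : ℝ) : ℂ))⁻¹ with hr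
  have hk : (kx : ℂ) ^ 2 + (ky : ℂ) ^ 2 + (kz : ℂ) ^ 2 + (M : ℂ) ^ 2 = (Ek : ℂ) ^ 2 := by
    have : Ek ^ 2 = kx ^ 2 + ky ^ 2 + kz ^ 2 + M ^ 2 := by
      rw [hEk]; rw [Real.sq_sqrt] ; positivity
    have h2 : ((Ek : ℂ)) ^ 2 = (((kx ^ 2 + ky ^ 2 + kz ^ 2 + M ^ 2 : ℝ)) : ℂ) := by
      rw [← this]; push_cast; ring
    rw [h2]; push_cast; ring
  have hform : slashK E kx ky kz + (μ : ℂ) • gamma0 - (M : ℂ) • 1 -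
        r • (slashK E kx ky kz - (μ : ℂ) • gamma0 - (M : ℂ) • 1)
      = ((E : ℂ) + μ - r * ((E : ℂ) - μ)) • gamma0 - ((1 - r) * kx) • gamma1
          - ((1 - r) * ky) • gamma2 - ((1 - r) * kz) • gamma3 - ((1 - r) * M) • 1 := by
    unfold slashK
    module
  rw [hform, det_dirac]
  have h1 : ((1 - r) * kx) ^ 2 + ((1 - r) * ky) ^ 2 + ((1 - r) * kz) ^ 2 + ((1 - r) * M) ^ 2
      = (1 - r) ^ 2 * (Ek : ℂ) ^ 2 := by
    rw [← hk]; ring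
  have hgoal : ((E : ℂ) + μ - r * ((E : ℂ) - μ)) ^ 2 - ((1 - r) * kx) ^ 2 - ((1 - r) * ky) ^ 2
      - ((1 - r) * kz) ^ 2 - ((1 - r) * M) ^ 2
      = ((E : ℂ) + μ - r * ((E : ℂ) - μ)) ^ 2 - (1 - r) ^ 2 * (Ek : ℂ) ^ 2 := by
    rw [← h1]; ring
  rw [show ((E : ℂ) + μ - r * ((E : ℂ) - μ)) ^ 2 - ((1 - r) * kx) ^ 2 - ((1 - r) * ky) ^ 2
      - ((1 - r) * kz) ^ 2 - ((1 - r) * M) ^ 2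
      = ((E : ℂ) + μ - r * ((E : ℂ) - μ)) ^ 2 - (1 - r) ^ 2 * (Ek : ℂ) ^ 2 from hgoal]
  -- now pure algebra in E, μ, Ek, r
  have hd0 : ((E - μ) ^ 2 - Ek ^ 2 : ℝ) ≠ 0 := sub_ne_zero.mpr h
  have hd : (((E - μ) ^ 2 - Ek ^ 2 : ℝ) : ℂ) ≠ 0 := by exact_mod_cast hd0
  have hfac : (((E - μ) ^ 2 - Ek ^ 2 : ℝ) : ℂ)
      = ((E : ℂ) - Ek - μ) * ((E : ℂ) + Ek - μ) := by push_cast; ring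
  have h1 : ((E : ℂ) - Ek - μ) ≠ 0 := by
    intro hc; apply hd; rw [hfac, hc, zero_mul]
  have h2 : ((E : ℂ) + Ek - μ) ≠ 0 := by
    intro hc; apply hd; rw [hfac, hc, mul_zero]
  rw [hr, hfac]
  field_simp
  ring


end
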